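/- Let K be a differential field of characteristic 0 and let A, B ∈ M_n(K[∂]) be non-degenerate matrix differential operators (non-zero Dieudonné determinant). Then there exist non-degenerate C, D ∈ M_n(K[∂]) such that AC = BD (the right Ore condition for non-degenerate matrix differential operators). -/

import Mathlib

/-- The ring of differential operators K[∂] over a differential field (K, d),
characterized abstractly. -/
structure DiffOpRing (K : Type) [Field K] (d : K → K) (R : Type) [Ring R] where
  ι : K →+* R
  dop : R
  comm : ∀ a : K, dop * ι a = ι a * dop + ι (d a)
  repr : ∀ r : R, ∃! c : ℕ →₀ K, r = c.sum fun i a => ι a * dop ^ i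

/-- A matrix differential operator is non-degenerate (non-zero Dieudonné determinant,
i.e. invertible over the skewfield of pseudodifferential operators) if and only if it
has trivial right kernel over K[∂]. -/
def Nondeg {n : ℕ} {R : Type} [Ring R] (A : Matrix (Fin n) (Fin n) R) : Prop :=
  ∀ X : Fin n → R, A.mulVec X = 0 → X = 0

namespace DOR

variable {K : Type} [Field K] {d : K → K} {R : Type} [Ring R] (S : DiffOpRing K d R)

/-- right K-module structure on R : a • r = r * ι a -/
noncomputable def modK : Module K R :=
  Module.compHom R (S.ι.toOpposite fun x y => by
    simp only [Commute, SemiconjBy, ← map_mul, mul_comm])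

lemma smul_def (a : K) (r : R) : (letI := modK S; a • r) = r * S.ι a := rfl

/-- right-form sum: φ c = ∑ ∂^i * ι (c i) -/
noncomputable def phi : (ℕ →₀ K) →+ R :=
  Finsupp.liftAddHom fun i => (AddMonoidHom.mulLeft (S.dop ^ i)).comp S.ι.toAddMonoidHom

/-- left-form sum: ψ c = ∑ ι (c i) * ∂^i -/
noncomputable def psi : (ℕ →₀ K) →+ R :=
  Finsupp.liftAddHom fun i => (AddMonoidHom.mulRight (S.dop ^ i)).comp S.ι.toAddMonoidHom

lemma phi_apply (c : ℕ →₀ K) : phi S c = c.sum fun i a => S.dop ^ i * S.ι a := by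
  simp [phi, Finsupp.liftAddHom_apply]; rfl

lemma psi_apply (c : ℕ →₀ K) : psi S c = c.sum fun i a => S.ι a * S.dop ^ i := by
  simp [psi, Finsupp.liftAddHom_apply]; rfl

lemma phi_single (i : ℕ) (a : K) : phi S (Finsupp.single i a) = S.dop ^ i * S.ι a := by
  simp [phi]

lemma psi_single (i : ℕ) (a : K) : psi S (Finsupp.single i a) = S.ι a * S.dop ^ i := by
  simp [psi]

/-- moving ι a from the left of ∂^i to the right -/
lemma L1 (i : ℕ) (a : K) : ∃ c : ℕ →₀ K, (∀ t, i ≤ t → c t = 0) ∧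
    S.ι a * S.dop ^ i = S.dop ^ i * S.ι a + phi S c := by
  induction i generalizing a with
  | zero => exact ⟨0, fun t _ => rfl, by simp⟩
  | succ i ih =>
    obtain ⟨c, hc, hrepr⟩ := ih a
    -- ι a * ∂^(i+1) = (ι a * ∂^i) * ∂ = (∂^i ι a + φ c) * ∂
    have hstep : ∀ (b : K) (t : ℕ), (S.dop ^ t * S.ι b) * S.dop
        = S.dop ^ (t+1) * S.ι b + phi S (-Finsupp.single t (d b)) := by
      intro b t
      have h : S.ι b * S.dop = S.dop * S.ι b - S.ι (d b) := by
        rw [S.comm b]; abel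
      rw [mul_assoc, h, map_neg, phi_single, mul_sub, pow_succ, mul_assoc]
      abel
    have hphi : (phi S c) * S.dop = phi S (c.sum fun t b =>
        Finsupp.single (t+1) b - Finsupp.single t (d b)) := by
      rw [phi_apply, Finsupp.sum, Finsupp.sum, Finset.sum_mul, map_sum]
      refine Finset.sum_congr rfl fun t _ => ?_
      rw [hstep (c t) t, map_neg, phi_single, map_sub, phi_single, phi_single]
      abel
    refine ⟨-Finsupp.single i (d a) + c.sum (fun t b =>
        Finsupp.single (t+1) b - Finsupp.single t (d b)), ?_, ?_⟩
    · intro t ht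
      simp only [Finsupp.add_apply, Finsupp.neg_apply, Finsupp.single_apply]
      have h1 : ¬ (i = t) := by omega
      rw [if_neg h1]
      have h2 : (c.sum fun t' b => Finsupp.single (t'+1) b - Finsupp.single t' (d b)) t = 0 := by
        rw [Finsupp.sum_apply, Finsupp.sum, Finset.sum_eq_zero]
        intro t' ht'
        have htlt : t' < i := by
          by_contra hcon
          exact (Finsupp.mem_support_iff.mp ht') (hc t' (by omega))
        simp only [Finsupp.sub_apply, Finsupp.single_apply]
        rw [if_neg (by omega), if_neg (by omega)]
        ring
      rw [h2]; ring
    · rw [pow_succ, ← mul_assoc, hrepr, add_mul, hstep, hphi, map_add]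
      rw [pow_succ]
      abel

/-- moving ι a from the right of ∂^i to the left -/
lemma L1' (i : ℕ) (a : K) : ∃ c : ℕ →₀ K, (∀ t, i ≤ t → c t = 0) ∧
    S.dop ^ i * S.ι a = S.ι a * S.dop ^ i + psi S c := by
  induction i generalizing a with
  | zero => exact ⟨0, fun t _ => rfl, by simp⟩
  | succ i ih =>
    obtain ⟨c, hc, hrepr⟩ := ih a
    have key : S.dop ^ (i+1) * S.ι a = S.dop * (S.dop ^ i * S.ι a) := by
      rw [← mul_assoc, ← pow_succ']
    have hstep : ∀ (b : K) (t : ℕ), S.dop * (S.ι b * S.dop ^ t)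
        = S.ι b * S.dop ^ (t+1) + psi S (Finsupp.single t (d b)) := by
      intro b t
      rw [← mul_assoc, S.comm b, psi_single, pow_succ', add_mul, mul_assoc]
    have hpsi : S.dop * psi S c = psi S (c.sum fun t b =>
        Finsupp.single (t+1) b + Finsupp.single t (d b)) := by
      rw [psi_apply, Finsupp.sum, Finsupp.sum, Finset.mul_sum, map_sum]
      refine Finset.sum_congr rfl fun t _ => ?_
      rw [hstep (c t) t, map_add, psi_single, psi_single, pow_succ']
    refine ⟨Finsupp.single i (d a) + c.sum (fun t b =>
        Finsupp.single (t+1) b + Finsupp.single t (d b)), ?_, ?_⟩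
    · intro t ht
      simp only [Finsupp.add_apply, Finsupp.single_apply]
      have h1 : ¬ (i = t) := by omega
      rw [if_neg h1]
      have h2 : (c.sum fun t' b => Finsupp.single (t'+1) b + Finsupp.single t' (d b)) t = 0 := by
        rw [Finsupp.sum_apply, Finsupp.sum, Finset.sum_eq_zero]
        intro t' ht'
        have htlt : t' < i := by
          by_contra hcon
          exact (Finsupp.mem_support_iff.mp ht') (hc t' (by omega))
        simp only [Finsupp.add_apply, Finsupp.single_apply]
        rw [if_neg (by omega), if_neg (by omega)]
        ring
      rw [h2]; ring
    · rw [key, hrepr, mul_add, hstep, hpsi, map_add, pow_succ']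
      abel


/-- injectivity of phi -/
lemma phi_eq_zero {c : ℕ →₀ K} (h : phi S c = 0) : c = 0 := by
  by_contra hne
  -- convert to psi form
  have hsupp : c.support.Nonempty := Finsupp.support_nonempty_iff.mpr hne
  set T := c.support.max' hsupp with hT
  have hTmem : T ∈ c.support := c.support.max'_mem hsupp
  choose e he1 he2 using fun t => L1' S t (c t)
  have hconv : phi S c = psi S (c.support.sum fun t => Finsupp.single t (c t) + e t) := by
    rw [phi_apply, Finsupp.sum, map_sum]
    refine Finset.sum_congr rfl fun t _ => ?_
    rw [he2 t, map_add, psi_single]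
  set g := c.support.sum fun t => Finsupp.single t (c t) + e t with hg
  have hzero : (0 : R) = Finsupp.sum g fun i a => S.ι a * S.dop ^ i := by
    rw [← psi_apply, ← hconv, h]
  have h0' : (0 : R) = Finsupp.sum (0 : ℕ →₀ K) fun i a => S.ι a * S.dop ^ i := by simp
  have hgz : g = 0 := by
    obtain ⟨c₀, -, huniq⟩ := S.repr 0
    rw [huniq g hzero, huniq 0 h0']
  have : g T = c T := by
    rw [hg, Finset.sum_apply']
    rw [Finset.sum_eq_single T]
    · simp only [Finsupp.add_apply, Finsupp.single_apply, if_pos rfl]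
      rw [he1 T T le_rfl]; simp
    · intro t ht hne'
      simp only [Finsupp.add_apply, Finsupp.single_apply]
      rw [if_neg hne', he1 t T (Finset.le_max' _ _ ht)]
      ring
    · intro h'; exact absurd hTmem h'
  rw [hgz] at this
  exact (Finsupp.mem_support_iff.mp hTmem) this.symm

lemma phi_injective : Function.Injective (phi S) := by
  intro c1 c2 h
  have : phi S (c1 - c2) = 0 := by rw [map_sub, h, sub_self]
  exact sub_eq_zero.mp (phi_eq_zero S this)

/-- unique right representation -/
lemma rrepr (r : R) : ∃! c : ℕ →₀ K, r = phi S c := by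
  obtain ⟨c₀, hc₀, -⟩ := S.repr r
  choose e he1 he2 using fun t => L1 S t (c₀ t)
  have hex : r = phi S (c₀.support.sum fun t => Finsupp.single t (c₀ t) + e t) := by
    rw [hc₀, map_sum, Finsupp.sum]
    exact Finset.sum_congr rfl fun t _ => by rw [map_add, phi_single, ← he2 t]
  exact ⟨_, hex, fun c' hc' => phi_injective S (hc'.symm.trans hex)⟩


/-- right coefficients of r -/
noncomputable def rcoeff (r : R) : ℕ →₀ K := (rrepr S r).exists.choose

lemma phi_rcoeff (r : R) : phi S (rcoeff S r) = r := (rrepr S r).exists.choose_spec.symm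

lemma rcoeff_phi (c : ℕ →₀ K) : rcoeff S (phi S c) = c :=
  phi_injective S (phi_rcoeff S (phi S c))

lemma rcoeff_zero : rcoeff S (0 : R) = 0 := by
  have : phi S 0 = (0 : R) := map_zero _
  rw [← this, rcoeff_phi]

lemma rcoeff_eq_zero {r : R} (h : rcoeff S r = 0) : r = 0 := by
  rw [← phi_rcoeff S r, h, map_zero]

lemma rcoeff_add (r s : R) : rcoeff S (r + s) = rcoeff S r + rcoeff S s := by
  have : phi S (rcoeff S r + rcoeff S s) = r + s := by
    rw [map_add, phi_rcoeff, phi_rcoeff]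
  rw [← this, rcoeff_phi]

lemma rcoeff_sub (r s : R) : rcoeff S (r - s) = rcoeff S r - rcoeff S s := by
  have : phi S (rcoeff S r - rcoeff S s) = r - s := by
    rw [map_sub, phi_rcoeff, phi_rcoeff]
  rw [← this, rcoeff_phi]

lemma rcoeff_smul (a : K) (r : R) : rcoeff S (r * S.ι a) = a • rcoeff S r := by
  have : phi S (a • rcoeff S r) = r * S.ι a := by
    rw [phi_apply, Finsupp.sum_smul_index (fun i => by simp)]
    conv_rhs => rw [← phi_rcoeff S r]
    rw [phi_apply, Finsupp.sum, Finsupp.sum, Finset.sum_mul]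
    refine Finset.sum_congr rfl fun t _ => ?_
    rw [mul_comm a _, map_mul, ← mul_assoc]
  rw [← this, rcoeff_phi]

/-- coefficients of a monomial product -/
lemma mono_mul (i j : ℕ) (a b : K) :
    (∀ t, i + j < t → rcoeff S ((S.dop ^ i * S.ι a) * (S.dop ^ j * S.ι b)) t = 0) ∧
    rcoeff S ((S.dop ^ i * S.ι a) * (S.dop ^ j * S.ι b)) (i + j) = a * b := by
  obtain ⟨c, hc, hrepr⟩ := L1 S j a
  have key : (S.dop ^ i * S.ι a) * (S.dop ^ j * S.ι b)
      = phi S (Finsupp.single (i+j) (a*b) + c.sum fun t a' => Finsupp.single (i+t) (a'*b)) := by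
    have h1 : (S.dop ^ i * S.ι a) * (S.dop ^ j * S.ι b)
        = S.dop ^ i * (S.ι a * S.dop ^ j) * S.ι b := by
      rw [mul_assoc, mul_assoc, mul_assoc]
    rw [h1, hrepr, mul_add, add_mul, map_add, phi_single]
    congr 1
    · simp only [pow_add, map_mul, mul_assoc]
    · simp only [Finsupp.sum]
      rw [map_sum, phi_apply]
      simp only [Finsupp.sum]
      rw [Finset.mul_sum, Finset.sum_mul]
      refine Finset.sum_congr rfl fun t _ => ?_
      rw [phi_single, pow_add, map_mul]
      simp only [mul_assoc]
  rw [key, rcoeff_phi]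
  constructor
  · intro t ht
    simp only [Finsupp.add_apply, Finsupp.single_apply]
    rw [if_neg (by omega)]
    have : (c.sum fun t' a' => Finsupp.single (i+t') (a'*b)) t = 0 := by
      rw [Finsupp.sum_apply, Finsupp.sum, Finset.sum_eq_zero]
      intro t' ht'
      have : t' < j := by
        by_contra hcon
        exact (Finsupp.mem_support_iff.mp ht') (hc t' (by omega))
      rw [Finsupp.single_apply, if_neg (by omega)]
    rw [this, add_zero]
  · simp only [Finsupp.add_apply, Finsupp.single_apply, eq_self_iff_true, if_true]
    have : (c.sum fun t' a' => Finsupp.single (i+t') (a'*b)) (i+j) = 0 := by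
      rw [Finsupp.sum_apply, Finsupp.sum, Finset.sum_eq_zero]
      intro t' ht'
      have : t' < j := by
        by_contra hcon
        exact (Finsupp.mem_support_iff.mp ht') (hc t' (by omega))
      rw [Finsupp.single_apply, if_neg (by omega)]
    rw [this, add_zero]

/-- expansion of a product as double sum of monomials -/
lemma mul_expand (r s : R) : r * s =
    ∑ i ∈ (rcoeff S r).support, ∑ j ∈ (rcoeff S s).support,
      (S.dop ^ i * S.ι (rcoeff S r i)) * (S.dop ^ j * S.ι (rcoeff S s j)) := by
  conv_lhs => rw [← phi_rcoeff S r, ← phi_rcoeff S s]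
  rw [phi_apply, phi_apply, Finsupp.sum, Finsupp.sum, Finset.sum_mul_sum]

/-- degree bound for a product (strict bounds) -/
lemma mul_deg_bound {r s : R} {N M t : ℕ}
    (hr : ∀ u, N ≤ u → rcoeff S r u = 0) (hs : ∀ u, M ≤ u → rcoeff S s u = 0)
    (ht : N + M ≤ t + 1) : rcoeff S (r * s) t = 0 := by
  rw [mul_expand S r s]
  have : ∀ f : ℕ → R, ∀ sf : Finset ℕ, (∀ u, rcoeff S (f u) t = 0) →
      rcoeff S (∑ u ∈ sf, f u) t = 0 := by
    intro f sf hf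
    induction sf using Finset.induction with
    | empty => simp [rcoeff_zero]
    | insert _ _ h ih =>
      rw [Finset.sum_insert h, rcoeff_add, Finsupp.add_apply, hf, ih]; ring
  refine this _ _ fun i => this _ _ fun j => ?_
  by_cases hi : rcoeff S r i = 0
  · simp [hi, rcoeff_zero]
  by_cases hj : rcoeff S s j = 0
  · simp [hj, rcoeff_zero]
  have hiN : i < N := by by_contra hcon; exact hi (hr i (by omega))
  have hjM : j < M := by by_contra hcon; exact hj (hs j (by omega))
  exact (mono_mul S i j _ _).1 t (by omega)

/-- top coefficient of a product -/
lemma mul_top_coeff {r s : R} {N M : ℕ}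
    (hr : ∀ u, N < u → rcoeff S r u = 0) (hs : ∀ u, M < u → rcoeff S s u = 0) :
    rcoeff S (r * s) (N + M) = rcoeff S r N * rcoeff S s M := by
  rw [mul_expand S r s]
  have hsum : ∀ f : ℕ → R, ∀ sf : Finset ℕ,
      rcoeff S (∑ u ∈ sf, f u) (N+M) = ∑ u ∈ sf, rcoeff S (f u) (N+M) := by
    intro f sf
    induction sf using Finset.induction with
    | empty => simp [rcoeff_zero]
    | insert _ _ h ih => rw [Finset.sum_insert h, Finset.sum_insert h, rcoeff_add,
        Finsupp.add_apply, ih]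
  rw [hsum]
  simp_rw [hsum]
  rw [Finset.sum_eq_single N]
  · rw [Finset.sum_eq_single M]
    · exact (mono_mul S N M _ _).2
    · intro j hj hne
      have hjs : rcoeff S s j ≠ 0 := Finsupp.mem_support_iff.mp hj
      have hjM : j < M := by by_contra hcon; exact hjs (hs j (by omega))
      exact (mono_mul S N j _ _).1 _ (by omega)
    · intro hM
      simp [Finsupp.notMem_support_iff.mp hM, rcoeff_zero]
  · intro i hi hne
    have his : rcoeff S r i ≠ 0 := Finsupp.mem_support_iff.mp hi
    have hiN : i < N := by by_contra hcon; exact his (hr i (by omega))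
    refine Finset.sum_eq_zero fun j hj => ?_
    have hjs : rcoeff S s j ≠ 0 := Finsupp.mem_support_iff.mp hj
    have hjM : j ≤ M := by by_contra hcon; exact hjs (hs j (by omega))
    exact (mono_mul S i j _ _).1 _ (by omega)
  · intro hN
    refine Finset.sum_eq_zero fun j hj => ?_
    simp [Finsupp.notMem_support_iff.mp hN, rcoeff_zero]

include S in
/-- no zero divisors -/
lemma mul_ne_zero' {r s : R} (hr : r ≠ 0) (hs : s ≠ 0) : r * s ≠ (0 : R) := by
  have hcr : rcoeff S r ≠ 0 := fun h => hr (rcoeff_eq_zero S h)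
  have hcs : rcoeff S s ≠ 0 := fun h => hs (rcoeff_eq_zero S h)
  have hsupr : (rcoeff S r).support.Nonempty := Finsupp.support_nonempty_iff.mpr hcr
  have hsups : (rcoeff S s).support.Nonempty := Finsupp.support_nonempty_iff.mpr hcs
  set N := (rcoeff S r).support.max' hsupr
  set M := (rcoeff S s).support.max' hsups
  have hNr : rcoeff S r N ≠ 0 := Finsupp.mem_support_iff.mp ((rcoeff S r).support.max'_mem hsupr)
  have hMs : rcoeff S s M ≠ 0 := Finsupp.mem_support_iff.mp ((rcoeff S s).support.max'_mem hsups)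
  have hr' : ∀ u, N < u → rcoeff S r u = 0 := fun u hu =>
    Finsupp.notMem_support_iff.mp (fun hmem => absurd (Finset.le_max' _ _ hmem) (by omega))
  have hs' : ∀ u, M < u → rcoeff S s u = 0 := fun u hu =>
    Finsupp.notMem_support_iff.mp (fun hmem => absurd (Finset.le_max' _ _ hmem) (by omega))
  intro h0
  have := mul_top_coeff S hr' hs'
  rw [h0, rcoeff_zero] at this
  exact (mul_ne_zero hNr hMs) this.symm


lemma rcoeff_neg (r : R) (t : ℕ) : rcoeff S (-r) t = - rcoeff S r t := by
  have : rcoeff S (0 - r) = rcoeff S 0 - rcoeff S r := rcoeff_sub S 0 r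
  rw [zero_sub, rcoeff_zero] at this
  rw [this]; simp

lemma rcoeff_finsum {α : Type} (f : α → R) (sf : Finset α) (t : ℕ) :
    rcoeff S (∑ u ∈ sf, f u) t = ∑ u ∈ sf, rcoeff S (f u) t := by
  classical
  induction sf using Finset.induction with
  | empty => simp [rcoeff_zero]
  | insert _ _ h ih => rw [Finset.sum_insert h, Finset.sum_insert h, rcoeff_add,
      Finsupp.add_apply, ih]

lemma phi_smul (a : K) (c : ℕ →₀ K) : phi S (a • c) = phi S c * S.ι a := by
  have h := rcoeff_smul S a (phi S c)
  rw [rcoeff_phi] at h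
  rw [← h, phi_rcoeff]

/-- bound on rcoeff of mulVec entries -/
lemma mulVec_bound {n : ℕ} (M : Matrix (Fin n) (Fin n) R) (w : Fin n → R) {m N : ℕ}
    (hM : ∀ i j t, m ≤ t → rcoeff S (M i j) t = 0)
    (hw : ∀ k t, N ≤ t → rcoeff S (w k) t = 0)
    {t : ℕ} (ht : m + N ≤ t + 1) (i : Fin n) : rcoeff S (M.mulVec w i) t = 0 := by
  show rcoeff S (∑ k, M i k * w k) t = 0
  rw [rcoeff_finsum]
  exact Finset.sum_eq_zero fun k _ => mul_deg_bound S (hM i k) (hw k) ht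

include S in
/-- a uniform degree bound for the entries of two matrices -/
lemma exists_bound {n : ℕ} (A B : Matrix (Fin n) (Fin n) R) :
    ∃ m, 0 < m ∧ (∀ i j t, m ≤ t → rcoeff S (A i j) t = 0) ∧
      (∀ i j t, m ≤ t → rcoeff S (B i j) t = 0) := by
  classical
  refine ⟨(Finset.univ.sup fun p : Fin n × Fin n =>
    ((rcoeff S (A p.1 p.2)).support ∪ (rcoeff S (B p.1 p.2)).support).sup id) + 1,
    Nat.succ_pos _, ?_, ?_⟩ <;>
  · intro i j t ht
    by_contra hne
    have hmem : t ∈ (rcoeff S (A i j)).support ∪ (rcoeff S (B i j)).support := by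
      rw [Finset.mem_union]
      first
      | exact Or.inl (Finsupp.mem_support_iff.mpr hne)
      | exact Or.inr (Finsupp.mem_support_iff.mpr hne)
    have h1 : t ≤ ((rcoeff S (A i j)).support ∪ (rcoeff S (B i j)).support).sup id :=
      Finset.le_sup (f := id) hmem
    have h2 : ((rcoeff S (A i j)).support ∪ (rcoeff S (B i j)).support).sup id
        ≤ Finset.univ.sup fun p : Fin n × Fin n =>
          ((rcoeff S (A p.1 p.2)).support ∪ (rcoeff S (B p.1 p.2)).support).sup id :=
      Finset.le_sup (f := fun p : Fin n × Fin n =>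
        ((rcoeff S (A p.1 p.2)).support ∪ (rcoeff S (B p.1 p.2)).support).sup id)
        (Finset.mem_univ (i, j))
    omega

/-- embedding of truncated coefficient vectors into finsupps -/
noncomputable def pad (N : ℕ) (v : Fin N → K) : ℕ →₀ K :=
  ∑ i : Fin N, Finsupp.single (i : ℕ) (v i)

lemma pad_apply_lt {N : ℕ} (v : Fin N → K) (i : Fin N) : pad N v (i : ℕ) = v i := by
  rw [pad, Finsupp.finset_sum_apply]
  rw [Finset.sum_eq_single i]
  · simp
  · intro b _ hb
    rw [Finsupp.single_apply, if_neg (by simpa [Fin.val_eq_val] using hb)]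
  · intro h; exact absurd (Finset.mem_univ i) h

lemma pad_apply_ge {N : ℕ} (v : Fin N → K) (t : ℕ) (ht : N ≤ t) : pad N v t = 0 := by
  rw [pad, Finsupp.finset_sum_apply]
  exact Finset.sum_eq_zero fun i _ =>
    by rw [Finsupp.single_apply, if_neg (by omega)]

lemma pad_add {N : ℕ} (v w : Fin N → K) : pad N (v + w) = pad N v + pad N w := by
  simp [pad, Finsupp.single_add, Finset.sum_add_distrib]

lemma pad_smul {N : ℕ} (a : K) (v : Fin N → K) : pad N (a • v) = a • pad N v := by
  simp [pad, Finsupp.smul_single, Finset.smul_sum]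

lemma pad_eq_zero {N : ℕ} {v : Fin N → K} (h : pad N v = 0) : v = 0 := by
  funext i
  have := pad_apply_lt v i
  rw [h] at this
  simpa using this.symm

/-- abstract dimension-counting lemma -/
lemma count {V W U U' : Type} [AddCommGroup V] [Module K V] [AddCommGroup W] [Module K W]
    [AddCommGroup U] [Module K U] [AddCommGroup U'] [Module K U']
    [FiniteDimensional K W] [FiniteDimensional K U']
    (f : V →ₗ[K] W) (pr : V →ₗ[K] U) (rho : V →ₗ[K] U')
    (h0 : ∀ v, f v = 0 → pr v = 0 → rho v = 0 → v = 0)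
    (hdim : Module.finrank K W + Module.finrank K U' < Module.finrank K V) :
    ∃ v, f v = 0 ∧ pr v ≠ 0 := by
  by_contra hcon
  push_neg at hcon
  have hker : LinearMap.ker (f.prod rho) = ⊥ := by
    rw [LinearMap.ker_eq_bot']
    intro v hv
    have h1 : f v = 0 := congrArg Prod.fst hv
    have h2 : rho v = 0 := congrArg Prod.snd hv
    exact h0 v h1 (hcon v h1) h2
  have hinj : Function.Injective (f.prod rho) := LinearMap.ker_eq_bot.mp hker
  have hle := LinearMap.finrank_le_finrank_of_injective hinj
  rw [Module.finrank_prod] at hle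
  exact absurd hdim (not_lt.mpr hle)

lemma rzero (r : R) (h : ∀ t, rcoeff S r t = 0) : r = 0 :=
  rcoeff_eq_zero S (Finsupp.ext h)

include S in
/-- key column lemma -/
lemma column {n : ℕ} (A B : Matrix (Fin n) (Fin n) R)
    (hB : Nondeg B) (j : Fin n) :
    ∃ c dvv : Fin n → R, A.mulVec c = B.mulVec dvv ∧ c j ≠ 0 ∧ ∀ k, j < k → c k = 0 := by
  classical
  obtain ⟨m, hm0, hAm, hBm⟩ := exists_bound S A B
  set N := n * m + 1 with hN
  set cv : (Fin n → Fin N → K) → (Fin n → R) :=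
    fun x k => if k ≤ j then phi S (pad N (x k)) else 0 with hcv
  set dv' : (Fin n → Fin N → K) → (Fin n → R) := fun y k => phi S (pad N (y k)) with hdv
  set E : ((Fin n → Fin N → K) × (Fin n → Fin N → K)) → (Fin n → R) :=
    fun v => A.mulVec (cv v.1) - B.mulVec (dv' v.2) with hE
  have cv_add : ∀ x x', cv (x + x') = cv x + cv x' := by
    intro x x'; funext k
    by_cases h : k ≤ j <;> simp [hcv, h, pad_add, map_add]
  have dv_add : ∀ y y', dv' (y + y') = dv' y + dv' y' := by
    intro y y'; funext k; simp [hdv, pad_add, map_add]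
  have cv_smul : ∀ (a : K) x, cv (a • x) = fun k => cv x k * S.ι a := by
    intro a x; funext k
    by_cases h : k ≤ j <;> simp [hcv, h, pad_smul, phi_smul]
  have dv_smul : ∀ (a : K) y, dv' (a • y) = fun k => dv' y k * S.ι a := by
    intro a y; funext k; simp [hdv, pad_smul, phi_smul]
  have mulVec_smul : ∀ (M : Matrix (Fin n) (Fin n) R) (w : Fin n → R) (a : K),
      M.mulVec (fun k => w k * S.ι a) = fun i => M.mulVec w i * S.ι a := by
    intro M w a; funext i
    show ∑ k, M i k * (w k * S.ι a) = (∑ k, M i k * w k) * S.ι a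
    rw [Finset.sum_mul]
    exact Finset.sum_congr rfl fun k _ => (mul_assoc _ _ _).symm
  -- degree bounds for cv and dv'
  have cv_bound : ∀ x k t, N ≤ t → rcoeff S (cv x k) t = 0 := by
    intro x k t ht
    by_cases h : k ≤ j
    · simp only [hcv, if_pos h, rcoeff_phi]
      exact pad_apply_ge _ t ht
    · simp only [hcv, if_neg h, rcoeff_zero, Finsupp.coe_zero, Pi.zero_apply]
  have dv_bound : ∀ y k t, N ≤ t → rcoeff S (dv' y k) t = 0 := by
    intro y k t ht
    simp only [hdv, rcoeff_phi]
    exact pad_apply_ge _ t ht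
  -- the three linear maps
  set F : ((Fin n → Fin N → K) × (Fin n → Fin N → K)) →ₗ[K] (Fin n → Fin (N+m) → K) :=
    { toFun := fun v i t => rcoeff S (E v i) (t : ℕ)
      map_add' := by
        intro v w
        funext i t
        show rcoeff S (E (v+w) i) (t:ℕ) = rcoeff S (E v i) (t:ℕ) + rcoeff S (E w i) (t:ℕ)
        have hEvw : E (v + w) = E v + E w := by
          show A.mulVec (cv (v.1 + w.1)) - B.mulVec (dv' (v.2 + w.2)) = _
          rw [cv_add, dv_add, Matrix.mulVec_add, Matrix.mulVec_add]
          show _ = (A.mulVec (cv v.1) - B.mulVec (dv' v.2))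
            + (A.mulVec (cv w.1) - B.mulVec (dv' w.2))
          abel
        rw [hEvw]
        show rcoeff S (E v i + E w i) (t:ℕ) = _
        rw [rcoeff_add, Finsupp.add_apply]
      map_smul' := by
        intro a v
        funext i t
        show rcoeff S (E (a • v) i) (t:ℕ) = a * rcoeff S (E v i) (t:ℕ)
        have hEav : E (a • v) i = E v i * S.ι a := by
          show (A.mulVec (cv (a • v.1)) - B.mulVec (dv' (a • v.2))) i = _
          rw [cv_smul, dv_smul, mulVec_smul, mulVec_smul]
          show A.mulVec (cv v.1) i * S.ι a - B.mulVec (dv' v.2) i * S.ι a = _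
          rw [← sub_mul]
          rfl
        rw [hEav]
        have h2 := rcoeff_smul S a (E v i)
        rw [h2]
        rfl } with hF
  set pr : ((Fin n → Fin N → K) × (Fin n → Fin N → K)) →ₗ[K] (Fin N → K) :=
    { toFun := fun v => v.1 j
      map_add' := fun _ _ => rfl
      map_smul' := fun _ _ => rfl } with hpr
  set rho : ((Fin n → Fin N → K) × (Fin n → Fin N → K)) →ₗ[K]
      ({k : Fin n // k ≠ j} → Fin N → K) :=
    { toFun := fun v k => v.1 k
      map_add' := fun _ _ => rfl
      map_smul' := fun _ _ => rfl } with hrho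
  -- h0 : joint kernel trivial
  have h0 : ∀ v, F v = 0 → pr v = 0 → rho v = 0 → v = 0 := by
    intro v hFv hprv hrhov
    have hx : v.1 = 0 := by
      funext k
      by_cases h : k = j
      · rw [h]; exact hprv
      · exact congrFun hrhov ⟨k, h⟩
    have hcv0 : cv v.1 = 0 := by
      funext k
      by_cases h : k ≤ j
      · simp [hcv, h, hx, pad]
      · simp [hcv, h]
    have hBd : B.mulVec (dv' v.2) = 0 := by
      funext i
      refine rzero S _ fun t => ?_
      by_cases ht : t < N + m
      · have h1 : rcoeff S (E v i) t = 0 := congrFun (congrFun hFv i) ⟨t, ht⟩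
        have h2 : E v i = -(B.mulVec (dv' v.2) i) := by
          show (A.mulVec (cv v.1) - B.mulVec (dv' v.2)) i = _
          rw [hcv0, Matrix.mulVec_zero]
          show (0 : Fin n → R) i - B.mulVec (dv' v.2) i = _
          rw [Pi.zero_apply, zero_sub]
        rw [h2, rcoeff_neg, neg_eq_zero] at h1
        exact h1
      · exact mulVec_bound S B (dv' v.2) hBm (dv_bound v.2) (by omega) i
    have hy : v.2 = 0 := by
      have hd0 : dv' v.2 = 0 := hB _ hBd
      funext k
      have : phi S (pad N (v.2 k)) = 0 := congrFun hd0 k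
      have hp : pad N (v.2 k) = 0 := phi_eq_zero S this
      exact pad_eq_zero hp
    rw [Prod.ext_iff]
    exact ⟨hx, hy⟩
  -- dimension count
  have frk : ∀ (a b : ℕ), Module.finrank K (Fin a → Fin b → K) = a * b := by
    intro a b
    rw [Module.finrank_pi_fintype]
    simp [Module.finrank_pi]
  have frU' : Module.finrank K ({k : Fin n // k ≠ j} → Fin N → K) = (n-1) * N := by
    rw [Module.finrank_pi_fintype]
    simp [Module.finrank_pi, Fintype.card_subtype_compl]
  have hdim : Module.finrank K (Fin n → Fin (N+m) → K)
      + Module.finrank K ({k : Fin n // k ≠ j} → Fin N → K)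
      < Module.finrank K ((Fin n → Fin N → K) × (Fin n → Fin N → K)) := by
    rw [Module.finrank_prod, frk, frk, frU']
    have h2 : n*m < N := by omega
    have h3 : N ≤ n*N := Nat.le_mul_of_pos_left N (Fin.pos j)
    rw [Nat.mul_add, Nat.sub_mul, one_mul]
    omega
  obtain ⟨v, hFv, hprv⟩ := count F pr rho h0 hdim
  refine ⟨cv v.1, dv' v.2, ?_, ?_, ?_⟩
  · have hE0 : ∀ i, E v i = 0 := by
      intro i
      refine rzero S _ fun t => ?_
      by_cases ht : t < N + m
      · exact congrFun (congrFun hFv i) ⟨t, ht⟩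
      · show rcoeff S ((A.mulVec (cv v.1) - B.mulVec (dv' v.2)) i) t = 0
        have : (A.mulVec (cv v.1) - B.mulVec (dv' v.2)) i
            = A.mulVec (cv v.1) i - B.mulVec (dv' v.2) i := rfl
        rw [this, rcoeff_sub, Finsupp.sub_apply,
          mulVec_bound S A (cv v.1) hAm (cv_bound v.1) (by omega) i,
          mulVec_bound S B (dv' v.2) hBm (dv_bound v.2) (by omega) i, sub_zero]
    funext i
    have := hE0 i
    simp only [hE] at this
    exact sub_eq_zero.mp this
  · show (if (j : Fin n) ≤ j then phi S (pad N (v.1 j)) else 0) ≠ 0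
    rw [if_pos le_rfl]
    intro hzero
    exact hprv (pad_eq_zero (phi_eq_zero S hzero))
  · intro k hk
    show (if k ≤ j then phi S (pad N (v.1 k)) else 0) = 0
    rw [if_neg (not_le.mpr hk)]

end DOR

/-- Let K be a differential field of characteristic 0 and A, B ∈
M_n(K[∂]) non-degenerate. Then there exist non-degenerate C, D ∈ M_n(K[∂]) such that
AC = BD (right Ore condition for non-degenerate matrix differential operators). -/
theorem stmt_11 (K : Type) [Field K] [CharZero K] (d : K → K)
    (hd_add : ∀ a b : K, d (a + b) = d a + d b)
    (hd_mul : ∀ a b : K, d (a * b) = a * d b + d a * b)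
    (R : Type) [Ring R] (S : DiffOpRing K d R)
    (n : ℕ) (A B : Matrix (Fin n) (Fin n) R)
    (hA : Nondeg A) (hB : Nondeg B) :
    ∃ C D : Matrix (Fin n) (Fin n) R, Nondeg C ∧ Nondeg D ∧ A * C = B * D := by
  classical
  have hcol := fun j : Fin n => DOR.column S A B hB j
  choose c dvv hcd hcj hctri using hcol
  set C : Matrix (Fin n) (Fin n) R := Matrix.of (fun k j => c j k) with hCdef
  set D : Matrix (Fin n) (Fin n) R := Matrix.of (fun k j => dvv j k) with hDdef
  have hACBD : A * C = B * D := by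
    ext i j
    rw [Matrix.mul_apply, Matrix.mul_apply]
    have h := congrFun (hcd j) i
    simpa [Matrix.mulVec, dotProduct, hCdef, hDdef] using h
  have hC : Nondeg C := by
    intro X hX
    by_contra hne
    have hex : (Finset.univ.filter fun j => X j ≠ 0).Nonempty := by
      by_contra hall
      rw [Finset.not_nonempty_iff_eq_empty] at hall
      refine hne (funext fun j => ?_)
      simp only [Pi.zero_apply]
      by_contra hj
      have : j ∈ Finset.univ.filter fun j => X j ≠ 0 := by
        simp [hj]
      rw [hall] at this
      exact absurd this (Finset.notMem_empty j)
    set j0 := (Finset.univ.filter fun j => X j ≠ 0).max' hex with hj0def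
    have hj0mem := (Finset.univ.filter fun j => X j ≠ 0).max'_mem hex
    have hj0 : X j0 ≠ 0 := (Finset.mem_filter.mp hj0mem).2
    have hrow : ∑ k, C j0 k * X k = 0 := congrFun hX j0
    have hsingle : ∑ k, C j0 k * X k = C j0 j0 * X j0 := by
      refine Finset.sum_eq_single j0 (fun k _ hkne => ?_) (fun h => absurd (Finset.mem_univ j0) h)
      rcases lt_or_gt_of_ne hkne with hlt | hgt
      · -- k < j0 : c k j0 = 0
        have : C j0 k = 0 := hctri k j0 hlt
        rw [this, zero_mul]
      · -- k > j0 : X k = 0 by maximality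
        have : X k = 0 := by
          by_contra hk0
          have hkmem : k ∈ Finset.univ.filter fun j => X j ≠ 0 := by simp [hk0]
          have := Finset.le_max' _ k hkmem
          exact absurd this (not_le.mpr hgt)
        rw [this, mul_zero]
    rw [hsingle] at hrow
    exact DOR.mul_ne_zero' S (hcj j0) hj0 hrow
  have hD : Nondeg D := by
    intro X hX
    have h1 : (B * D).mulVec X = 0 := by
      rw [← Matrix.mulVec_mulVec, hX, Matrix.mulVec_zero]
    rw [← hACBD, ← Matrix.mulVec_mulVec] at h1
    exact hC _ (hA _ h1)
  exact ⟨C, D, hC, hD, hACBD⟩
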